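/- Any voting method F satisfying positive involvement and the weak Condorcet winner criterion refines the defensible set on all profiles (with strict weak order preferences): for every profile P, F(P) ⊆ D(P). -/
import Mathlib


open scoped Classical

/-- A profile assigns to each voter in a finite nonempty set of voters a
preference relation on the alternatives. -/
structure Profile (α V : Type*) where
  voters : Finset V
  pref : V → α → α → Prop
  voters_nonempty : voters.Nonempty

/-- The number of voters strictly preferring `x` to `y` (as an integer). -/
noncomputable def Profile.support {α V : Type*} (P : Profile α V) (x y : α) : ℤ :=
  ((P.voters.filter fun i => P.pref i x y).card : ℤ)

/-- The majority margin of `x` over `y`. -/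
noncomputable def Profile.margin {α V : Type*} (P : Profile α V) (x y : α) : ℤ :=
  P.support x y - P.support y x

/-- Every voter's preference is a strict linear order. -/
def Profile.linear {α V : Type*} (P : Profile α V) : Prop :=
  ∀ i ∈ P.voters,
    (∀ x, ¬ P.pref i x x) ∧
    (∀ x y z, P.pref i x y → P.pref i y z → P.pref i x z) ∧
    (∀ x y, x ≠ y → P.pref i x y ∨ P.pref i y x)

/-- Every voter's preference is a strict weak order. -/
def Profile.swo {α V : Type*} (P : Profile α V) : Prop :=
  ∀ i ∈ P.voters,
    (∀ x, ¬ P.pref i x x) ∧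
    (∀ x y z, P.pref i x y → P.pref i y z → P.pref i x z) ∧
    (∀ x y z, (¬ P.pref i x y ∧ ¬ P.pref i y x) → (¬ P.pref i y z ∧ ¬ P.pref i z y) →
      (¬ P.pref i x z ∧ ¬ P.pref i z x))

/-- The defensible set of a profile. -/
noncomputable def Profile.defensible {α V : Type*} (P : Profile α V) : Set α :=
  {x | ∀ y, ∃ z, P.margin y x ≤ P.margin z y}

/-- new voter relation: x first, y second, rest tied -/
def Rxy {α : Type*} (x y : α) (u v : α) : Prop :=
  (u = x ∧ v ≠ x) ∨ (u = y ∧ v ≠ x ∧ v ≠ y)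

noncomputable def addVoter {α V : Type*} (P : Profile α V) (j : V) (R : α → α → Prop) :
    Profile α V where
  voters := insert j P.voters
  pref := fun i => if i = j then R else P.pref i
  voters_nonempty := Finset.insert_nonempty _ _

lemma addVoter_pref_old {α V : Type*} (P : Profile α V) (j : V) (hj : j ∉ P.voters)
    (R : α → α → Prop) (i : V) (hi : i ∈ P.voters) (u v : α) :
    (addVoter P j R).pref i u v ↔ P.pref i u v := by
  have : i ≠ j := fun h => hj (h ▸ hi)
  simp [addVoter, this]

lemma addVoter_pref_new {α V : Type*} (P : Profile α V) (j : V)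
    (R : α → α → Prop) (u v : α) : (addVoter P j R).pref j u v ↔ R u v := by
  simp [addVoter]

lemma addVoter_support {α V : Type*} (P : Profile α V) (j : V) (hj : j ∉ P.voters)
    (R : α → α → Prop) (u v : α) :
    (addVoter P j R).support u v = P.support u v + if R u v then 1 else 0 := by
  unfold Profile.support
  have hfil : ((addVoter P j R).voters.filter fun i => (addVoter P j R).pref i u v)
      = (if R u v then {j} else ∅) ∪ (P.voters.filter fun i => P.pref i u v) := by
    show ((insert j P.voters).filter _) = _
    rw [Finset.filter_insert]
    have h2 : (P.voters.filter fun i => (addVoter P j R).pref i u v)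
        = P.voters.filter fun i => P.pref i u v := by
      apply Finset.filter_congr
      intro i hi
      simp [addVoter_pref_old P j hj R i hi u v]
    by_cases h : R u v
    · rw [if_pos ((addVoter_pref_new P j R u v).2 h), if_pos h, h2,
        Finset.insert_eq]
    · rw [if_neg (fun hc => h ((addVoter_pref_new P j R u v).1 hc)), if_neg h, h2,
        Finset.empty_union]
  rw [hfil]
  by_cases h : R u v
  · rw [if_pos h, if_pos h]
    rw [Finset.card_union_of_disjoint]
    · simp only [Finset.card_singleton]; push_cast; ring
    · simp only [Finset.disjoint_singleton_left, Finset.mem_filter]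
      exact fun hc => hj hc.1
  · simp [h]

lemma addVoter_margin {α V : Type*} (P : Profile α V) (j : V) (hj : j ∉ P.voters)
    (R : α → α → Prop) (u v : α) :
    (addVoter P j R).margin u v
      = P.margin u v + ((if R u v then 1 else 0) - (if R v u then 1 else 0)) := by
  unfold Profile.margin
  rw [addVoter_support P j hj R u v, addVoter_support P j hj R v u]
  ring

set_option maxHeartbeats 2000000 in
lemma Rxy_swo {α V : Type*} (P : Profile α V) (hP : P.swo) (j : V) (hj : j ∉ P.voters)
    (x y : α) : (addVoter P j (Rxy x y)).swo := by
  intro i hi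
  by_cases hij : i = j
  · subst hij
    refine ⟨?_, ?_, ?_⟩
    · intro u
      simp only [addVoter_pref_new, Rxy]
      tauto
    · intro u v w
      simp only [addVoter_pref_new, Rxy]
      tauto
    · intro u v w
      simp only [addVoter_pref_new, Rxy]
      tauto
  · have hi' : i ∈ P.voters := by
      rcases Finset.mem_insert.1 hi with h | h
      · exact absurd h hij
      · exact h
    have := hP i hi'
    refine ⟨fun u => ?_, fun u v w h1 h2 => ?_, fun u v w h1 h2 => ?_⟩
    · rw [addVoter_pref_old P j hj _ i hi']; exact this.1 u
    · rw [addVoter_pref_old P j hj _ i hi'] at h1 h2 ⊢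
      exact this.2.1 u v w h1 h2
    · simp only [addVoter_pref_old P j hj _ i hi'] at h1 h2 ⊢
      exact this.2.2 u v w h1 h2

lemma key_induction {α V : Type*} [Infinite V] (F : Profile α V → Set α)
    (hPI : ∀ (P P' : Profile α V) (j : V) (x : α), P.swo → P'.swo →
      j ∉ P.voters → P'.voters = insert j P.voters →
      (∀ i ∈ P.voters, ∀ u v : α, P'.pref i u v ↔ P.pref i u v) →
      (∀ y : α, y ≠ x → P'.pref j x y) →
      x ∈ F P → x ∈ F P')
    (x y : α) :
    ∀ (t : ℕ) (P : Profile α V), P.swo → x ∈ F P →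
      ∃ P' : Profile α V, P'.swo ∧ x ∈ F P' ∧
        ∀ u v, P'.margin u v = P.margin u v
          + (t : ℤ) * ((if Rxy x y u v then 1 else 0) - (if Rxy x y v u then 1 else 0)) := by
  intro t
  induction t with
  | zero => exact fun P hP hx => ⟨P, hP, hx, by simp⟩
  | succ t ih =>
    intro P hP hx
    obtain ⟨Q, hQ, hxQ, hm⟩ := ih P hP hx
    obtain ⟨j, hj⟩ := Infinite.exists_notMem_finset Q.voters
    refine ⟨addVoter Q j (Rxy x y), Rxy_swo Q hQ j hj x y, ?_, ?_⟩
    · exact hPI Q _ j x hQ (Rxy_swo Q hQ j hj x y) hj rfl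
        (fun i hi u v => addVoter_pref_old Q j hj _ i hi u v)
        (fun z hz => (addVoter_pref_new Q j _ x z).2 (Or.inl ⟨rfl, hz⟩)) hxQ
    · intro u v
      rw [addVoter_margin Q j hj _ u v, hm u v]
      push_cast; ring

/-- Any voting method satisfying positive involvement and the weak
Condorcet winner criterion refines the defensible set on all profiles. -/
theorem refines_defensible_of_posInv_weakCondorcet {α V : Type*} [Fintype α] [Nonempty α]
    [Infinite V] (F : Profile α V → Set α)
    (hne : ∀ P : Profile α V, P.swo → (F P).Nonempty)
    -- positive involvement
    (hPI : ∀ (P P' : Profile α V) (j : V) (x : α), P.swo → P'.swo →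
      j ∉ P.voters → P'.voters = insert j P.voters →
      (∀ i ∈ P.voters, ∀ u v : α, P'.pref i u v ↔ P.pref i u v) →
      (∀ y : α, y ≠ x → P'.pref j x y) →
      x ∈ F P → x ∈ F P')
    -- weak Condorcet winner criterion
    (hWCW : ∀ P : Profile α V, P.swo →
      (∃ x : α, ∀ y : α, y ≠ x → 0 ≤ P.margin x y) →
      ∀ x ∈ F P, ∀ y : α, y ≠ x → 0 ≤ P.margin x y) :
    ∀ P : Profile α V, P.swo → F P ⊆ P.defensible := by
  intro P hP x hx
  show ∀ y, ∃ z, P.margin y x ≤ P.margin z y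
  by_contra hxd
  simp only [not_forall, not_exists, not_le] at hxd
  obtain ⟨y, hy⟩ := hxd
  set m := P.margin y x with hmdef
  have hyy : P.margin y y = 0 := sub_self _
  have hm0 : 0 < m := by have := hy y; omega
  have hyx : y ≠ x := by
    rintro rfl
    omega
  set t : ℕ := (m - 1).toNat with htdef
  have ht : (t : ℤ) = m - 1 := Int.toNat_of_nonneg (by omega)
  obtain ⟨P', hP', hxP', hmar⟩ := key_induction F hPI x y t P hP hx
  have hRyx : ¬ Rxy x y y x := by
    rintro (⟨_, h⟩ | ⟨_, h, _⟩) <;> exact h rfl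
  have hRxy : Rxy x y x y := Or.inl ⟨rfl, hyx⟩
  have hantisym : P.margin x y = -m := by
    rw [hmdef]; unfold Profile.margin; ring
  have hcw : ∀ z : α, z ≠ y → 0 ≤ P'.margin y z := by
    intro z hz
    by_cases hzx : z = x
    · subst hzx
      rw [hmar y z, if_neg hRyx, if_pos hRxy, ht, ← hmdef]
      omega
    · have h1 : Rxy x y y z := Or.inr ⟨rfl, hzx, hz⟩
      have h2 : ¬ Rxy x y z y := by
        rintro (⟨h, _⟩ | ⟨h, _, _⟩) <;> [exact hzx h; exact hz h]
      rw [hmar y z, if_pos h1, if_neg h2, ht]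
      have h3 := hy z
      have h4 : P.margin y z = -(P.margin z y) := by unfold Profile.margin; ring
      omega
  have := hWCW P' hP' ⟨y, hcw⟩ x hxP' y hyx
  rw [hmar x y, if_pos hRxy, if_neg hRyx, ht, hantisym] at this
  omega
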